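/- arXiv:0710.4464 — 2 statements merged into one kernel-verified Lean document; each statement's English description precedes it below -/
import Mathlib

section
/- Let e be a nilpotent endomorphism of an n-dimensional vector space V with Jordan type given by a partition (λ_i) of n, realized via a basis {e^a·v_i : 0 ≤ a ≤ λ_i - 1}. Suppose there exist indices i₁, i₂ with 0 < λ_{i₁} = λ_{i₂} - 1. Define e_{i₁,i₂} ∈ gl(V) by e_{i₁,i₂}(e^a·v_{i₁}) = e^{a+1}·v_{i₂} for 0 ≤ a ≤ λ_{i₁}-1, e_{i₁,i₂}(e^a·v_{i₂}) = e^a·v_{i₁} for 0 ≤ a ≤ λ_{i₁}-1, and e_{i₁,i₂}(e^a·v_j) = 0 otherwise. Then e_{i₁,i₂}² = e_{i₁} + e_{i₂}, where e_j denotes the restriction of e to the Jordan block V_j = span{e^a·v_{j}} extended by zero on the other blocks; in particular e₁ := e_{i₁,i₂} + Σ_{j ≠ i₁,i₂} e_j commutes with e. -/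
variable {K V : Type*} [Field K] [AddCommGroup V] [Module K V]
variable {ι : Type*} [Fintype ι] [DecidableEq ι]

/-- The restriction `e_j` of `e` to the Jordan block indexed by `j`, extended by zero
on the other Jordan blocks. -/
noncomputable def eBlock {lam : ι → ℕ} (b : Module.Basis (Σ j : ι, Fin (lam j)) K V)
    (e : Module.End K V) (j : ι) : Module.End K V :=
  b.constr K fun s => if s.1 = j then e (b s) else 0

/-- The endomorphism `e_{i₁,i₂}` sending `e^a·v_{i₁} ↦ e^{a+1}·v_{i₂}` and
`e^a·v_{i₂} ↦ e^a·v_{i₁}` (for `0 ≤ a ≤ λ_{i₁} - 1`), and vanishing otherwise. -/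
noncomputable def eMix {lam : ι → ℕ} (b : Module.Basis (Σ j : ι, Fin (lam j)) K V)
    (e : Module.End K V) (v : ι → V) (i₁ i₂ : ι) : Module.End K V :=
  b.constr K fun s =>
    if s.1 = i₁ then (e ^ ((s.2 : ℕ) + 1)) (v i₂)
    else if s.1 = i₂ then (if (s.2 : ℕ) < lam i₁ then (e ^ (s.2 : ℕ)) (v i₁) else 0)
    else 0

/-- If `e` is nilpotent with Jordan type `(λ_j)` and `0 < λ_{i₁} = λ_{i₂} - 1`, then
`e_{i₁,i₂}² = e_{i₁} + e_{i₂}`; in particular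
`e₁ = e_{i₁,i₂} + Σ_{j ≠ i₁, i₂} e_j` commutes with `e`. -/
theorem eMix_sq_and_commute
    (lam : ι → ℕ) (v : ι → V) (e : Module.End K V)
    (b : Module.Basis (Σ j : ι, Fin (lam j)) K V)
    (hb : ∀ (j : ι) (a : Fin (lam j)), b ⟨j, a⟩ = (e ^ (a : ℕ)) (v j))
    (he0 : ∀ j : ι, (e ^ lam j) (v j) = 0)
    (i₁ i₂ : ι) (hne : i₁ ≠ i₂) (h1 : 0 < lam i₁) (h2 : lam i₂ = lam i₁ + 1) :
    (eMix b e v i₁ i₂) ^ 2 = eBlock b e i₁ + eBlock b e i₂ ∧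
      Commute e
        (eMix b e v i₁ i₂ + ∑ j ∈ (Finset.univ.erase i₁).erase i₂, eBlock b e j) := by
  classical
  have hz : ∀ (j : ι) (a : ℕ), lam j ≤ a → (e ^ a) (v j) = 0 := by
    intro j a ha
    obtain ⟨c, rfl⟩ := Nat.exists_eq_add_of_le ha
    rw [add_comm, pow_add, Module.End.mul_apply, he0, map_zero]
  have hb' : ∀ (j : ι) (a : ℕ) (ha : a < lam j), (e ^ a) (v j) = b ⟨j, ⟨a, ha⟩⟩ :=
    fun j a ha => (hb j ⟨a, ha⟩).symm
  have hE : ∀ (j : ι) (a : Fin (lam j)), e (b ⟨j, a⟩) = (e ^ ((a : ℕ) + 1)) (v j) := by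
    intro j a
    rw [hb, ← Module.End.mul_apply, ← pow_succ']
  have hMix : ∀ (s : Σ j : ι, Fin (lam j)), eMix b e v i₁ i₂ (b s) =
      if s.1 = i₁ then (e ^ ((s.2 : ℕ) + 1)) (v i₂)
      else if s.1 = i₂ then (if (s.2 : ℕ) < lam i₁ then (e ^ (s.2 : ℕ)) (v i₁) else 0)
      else 0 := fun s => by rw [eMix, Module.Basis.constr_basis]
  have hBl : ∀ (j : ι) (s : Σ j : ι, Fin (lam j)), eBlock b e j (b s) =
      if s.1 = j then e (b s) else 0 := fun j s => by rw [eBlock, Module.Basis.constr_basis]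
  have hEb : ∀ (j : ι) (a : Fin (lam j)), e (b ⟨j, a⟩) =
      if h : (a : ℕ) + 1 < lam j then b ⟨j, ⟨(a : ℕ) + 1, h⟩⟩ else 0 := by
    intro j a
    rw [hE]
    split
    · exact hb' j _ _
    · exact hz j _ (by omega)
  constructor
  · apply b.ext
    rintro ⟨k, a⟩
    rw [pow_two, Module.End.mul_apply, LinearMap.add_apply, hMix, hBl, hBl]
    rcases eq_or_ne k i₁ with rfl | hk1
    · simp only [if_neg hne, eq_self_iff_true, if_true]
      have ha2 : (a : ℕ) + 1 < lam i₂ := by omega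
      rw [hb' _ _ ha2, hMix]
      simp only [if_neg (Ne.symm hne), eq_self_iff_true, if_true]
      rw [hE, add_zero]
      split
      · rfl
      · exact (hz _ _ (by omega)).symm
    · rcases eq_or_ne k i₂ with rfl | hk2
      · simp only [if_neg hk1, eq_self_iff_true, if_true]
        by_cases hlt : (a : ℕ) < lam i₁
        · rw [if_pos hlt, hb' _ _ hlt, hMix]
          simp only [eq_self_iff_true, if_true, if_neg (Ne.symm hk1)]
          rw [hE, zero_add]
        · rw [if_neg hlt, map_zero, hE, zero_add]
          exact (hz _ _ (by omega)).symm
      · simp only [if_neg hk1, if_neg hk2, map_zero, add_zero, zero_add]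
  · rw [Commute, SemiconjBy]
    have hi1 : i₁ ∉ (Finset.univ.erase i₁).erase i₂ := by simp [hne]
    have hi2 : i₂ ∉ (Finset.univ.erase i₁).erase i₂ := by simp
    have hS : ∀ s : Σ j : ι, Fin (lam j),
        (∑ j ∈ (Finset.univ.erase i₁).erase i₂, eBlock b e j) (b s) =
        if s.1 ∈ (Finset.univ.erase i₁).erase i₂ then e (b s) else 0 := by
      intro s
      rw [LinearMap.sum_apply]
      simp only [hBl]
      rw [Finset.sum_ite_eq]
    apply b.ext
    rintro ⟨k, a⟩
    rw [Module.End.mul_apply, Module.End.mul_apply, LinearMap.add_apply, hMix, hS]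
    dsimp only
    rcases eq_or_ne k i₁ with rfl | hk1
    · rw [if_pos rfl, if_neg hi1, add_zero, ← Module.End.mul_apply, ← pow_succ', hEb]
      split
      · rename_i h
        rw [LinearMap.add_apply, hMix, hS, if_pos rfl, if_neg hi1, add_zero]
      · rw [map_zero]
        exact hz _ _ (by omega)
    · rcases eq_or_ne k i₂ with rfl | hk2
      · rw [if_neg hk1, if_pos rfl, if_neg hi2, add_zero, hEb]
        by_cases hlt : (a : ℕ) < lam i₁
        · rw [if_pos hlt, ← Module.End.mul_apply, ← pow_succ']
          have ha2 : (a : ℕ) + 1 < lam k := by omega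
          rw [dif_pos ha2, LinearMap.add_apply, hMix, hS, if_neg hk1, if_pos rfl,
            if_neg hi2, add_zero]
          dsimp only
          split
          · rfl
          · exact hz _ _ (by omega)
        · have : ¬ ((a : ℕ) + 1 < lam k) := by omega
          rw [if_neg hlt, map_zero, dif_neg this, map_zero]
      · have hkS : k ∈ (Finset.univ.erase i₁).erase i₂ := by simp [hk1, hk2]
        rw [if_neg hk1, if_neg hk2, if_pos hkS, zero_add, hEb]
        split
        · rename_i h
          rw [LinearMap.add_apply, hMix, hS, if_neg hk1, if_neg hk2, if_pos hkS, zero_add]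
        · simp only [map_zero]
end

section
/- Let (g,θ) be a semisimple symmetric Lie algebra, (e,h,f) a normal sl2-triple (e,f ∈ p, h ∈ k), and suppose there exist t ∈ p(e,0) and ξ ∈ g(f,-1) with [t,ξ] = ξ, [t,θ(ξ)] = -θ(ξ), and L(e,[ξ,θ(ξ)]) ≠ 0. Then z := ξ + θ(ξ) ∈ k(f,-1) satisfies [[e,z],z] ≠ 0. -/
/-- In a semisimple symmetric Lie algebra, given a normal `sl₂`-triple `(e,h,f)`,
`t ∈ p(e,0)` and `ξ ∈ g(f,-1)` with `[t,ξ] = ξ`, `[t,θ(ξ)] = -θ(ξ)` and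
`L(e,[ξ,θ(ξ)]) ≠ 0`, the element `z = ξ + θ(ξ)` lies in `k(f,-1)` and satisfies
`[[e,z],z] ≠ 0`. -/
theorem z_in_kf_and_double_bracket_ne_zero
    (K : Type*) [Field K] [IsAlgClosed K] [CharZero K]
    (g : Type*) [LieRing g] [LieAlgebra K g] [FiniteDimensional K g]
    [LieAlgebra.IsSemisimple K g]
    (θ : g →ₗ⁅K⁆ g) (hθ : ∀ x, θ (θ x) = x)
    (e h f : g) (hpe : θ e = -e) (hpf : θ f = -f) (hkh : θ h = h)
    (hhe : ⁅h, e⁆ = (2 : K) • e) (hhf : ⁅h, f⁆ = -((2 : K) • f)) (hef : ⁅e, f⁆ = h)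
    (t : g) (hpt : θ t = -t) (hte : ⁅t, e⁆ = 0) (hth : ⁅t, h⁆ = 0)
    (ξ : g) (hfξ : ⁅f, ξ⁆ = 0) (hhξ : ⁅h, ξ⁆ = -ξ)
    (htξ : ⁅t, ξ⁆ = ξ) (htθξ : ⁅t, θ ξ⁆ = -θ ξ)
    (hL : killingForm K g e ⁅ξ, θ ξ⁆ ≠ 0) :
    θ (ξ + θ ξ) = ξ + θ ξ ∧ ⁅f, ξ + θ ξ⁆ = 0 ∧ ⁅h, ξ + θ ξ⁆ = -(ξ + θ ξ) ∧
      ⁅⁅e, ξ + θ ξ⁆, ξ + θ ξ⁆ ≠ 0 := by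
  have hfθξ : ⁅f, θ ξ⁆ = 0 := by
    have h1 := congrArg θ hfξ
    rw [LieHom.map_lie, hpf, map_zero, neg_lie, neg_eq_zero] at h1
    exact h1
  have hhθξ : ⁅h, θ ξ⁆ = -θ ξ := by
    have h1 := congrArg θ hhξ
    rw [LieHom.map_lie, hkh] at h1
    rw [h1, map_neg]
  refine ⟨by rw [map_add, hθ]; exact add_comm _ _,
    by rw [lie_add, hfξ, hfθξ, add_zero],
    by rw [lie_add, hhξ, hhθξ, neg_add], ?_⟩
  intro hz
  apply hL
  have key : killingForm K g ⁅⁅e, ξ + θ ξ⁆, ξ + θ ξ⁆ t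
      = 2 * killingForm K g e ⁅ξ, θ ξ⁆ := by
    rw [LieModule.traceForm_apply_lie_apply, LieModule.traceForm_apply_lie_apply]
    have hzt : ⁅ξ + θ ξ, t⁆ = θ ξ - ξ := by
      rw [← lie_skew, lie_add, htξ, htθξ]
      abel
    rw [hzt]
    have hzz : ⁅ξ + θ ξ, θ ξ - ξ⁆ = (2 : K) • ⁅ξ, θ ξ⁆ := by
      rw [add_lie, lie_sub, lie_sub, lie_self, lie_self, sub_zero, zero_sub,
        ← lie_skew ξ (θ ξ), two_smul]
    rw [hzz, map_smul, smul_eq_mul]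
  rw [hz, map_zero, LinearMap.zero_apply] at key
  have : (2 : K) ≠ 0 := two_ne_zero
  field_simp at key
  exact (mul_eq_zero.mp key.symm).resolve_left this
end
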